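/- Under the cyclic-rotation argument: given any string s of length k+1, form the cyclic ring by joining its last symbol to its first, and consider the k+1 linear strings R_0,...,R_k of length k+1 obtained by reading the ring starting at each position. Let r be a lexicographically minimum p-substring over all p-substrings appearing in all R_i. Then at most p+1 of the strings R_i have the property that their first or last p-substring is their unique minimum p-substring. -/

import Mathlib

open scoped Classical

def substr {α : Type*} (s : List α) (i len : ℕ) : List α := (s.drop i).take len

/-- The length-`p` substring of `s` at position `i` is the unique minimum `p`-substring. -/
def uniqueMinAt {α : Type*} [LinearOrder α] (s : List α) (p i : ℕ) : Prop :=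
  i + p ≤ s.length ∧ ∀ j, j + p ≤ s.length → j ≠ i → substr s i p < substr s j p

/-- The rotation `R_j` of a length-(k+1) string `s`, read cyclically starting at `j`. -/
def rot {α : Type*} {k : ℕ} (s : Fin (k + 1) → α) (j : Fin (k + 1)) : List α :=
  List.ofFn fun i => s (j + i)

open Fin.CommRing

/-- cyclic p-substring starting at m -/
def csub {α : Type*} {k : ℕ} (s : Fin (k + 1) → α) (p : ℕ) (m : Fin (k + 1)) : List α :=
  List.ofFn fun t : Fin p => s (m + ((t : ℕ) : Fin (k + 1)))

lemma substr_rot {α : Type*} {k p : ℕ} (s : Fin (k + 1) → α) (j : Fin (k + 1))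
    (i : ℕ) (h : i + p ≤ k + 1) :
    substr (rot s j) i p = csub s p (j + (i : Fin (k + 1))) := by
  apply List.ext_getElem
  · simp [substr, rot, csub]; omega
  · intro t h1 h2
    simp only [substr, rot, csub, List.getElem_take, List.getElem_drop, List.getElem_ofFn]
    congr 1
    have ht : t < p := by simpa [csub] using h2
    have hik : i + t < k + 1 := by omega
    have : (⟨i + t, hik⟩ : Fin (k + 1)) = ((i : Fin (k+1)) + ((t : ℕ) : Fin (k+1))) := by
      apply Fin.ext
      simp [Fin.add_def, Fin.val_cast_of_lt, Nat.mod_eq_of_lt, hik]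
    rw [this]; ring

theorem stmt3 {α : Type*} [LinearOrder α] (k p : ℕ) (hp : 0 < p) (hpk : p ≤ k)
    (s : Fin (k + 1) → α) :
    (Finset.univ.filter fun j : Fin (k + 1) =>
      uniqueMinAt (rot s j) p 0 ∨ uniqueMinAt (rot s j) p (k + 1 - p)).card ≤ p + 1 := by
  classical
  obtain ⟨m0, -, hm0⟩ :=
    Finset.exists_min_image Finset.univ (csub s p) ⟨0, Finset.mem_univ 0⟩
  have hmin : ∀ m, csub s p m0 ≤ csub s p m := fun m => hm0 m (Finset.mem_univ m)
  have hsub : (Finset.univ.filter fun j : Fin (k + 1) =>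
      uniqueMinAt (rot s j) p 0 ∨ uniqueMinAt (rot s j) p (k + 1 - p)) ⊆
      (Finset.range (p + 1)).image (fun t : ℕ => m0 + (t : Fin (k + 1))) := by
    intro j hj
    simp only [Finset.mem_filter, Finset.mem_univ, true_and] at hj
    set i : Fin (k + 1) := m0 - j with hi
    have hji : j + i = m0 := by rw [hi]; ring
    have hlen : (rot s j).length = k + 1 := by simp [rot]
    have hivl : (↑(i.val) : Fin (k + 1)) = i := Fin.cast_val_eq_self i
    simp only [Finset.mem_image, Finset.mem_range]
    have hwrap : ∀ t : ℕ, i.val + t = k + 1 → m0 + (t : Fin (k + 1)) = j := by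
      intro t ht
      have : i + (t : Fin (k + 1)) = 0 := by
        rw [← hivl, ← Nat.cast_add, ht]
        exact Fin.natCast_self (k + 1)
      calc m0 + (t : Fin (k + 1)) = j + (i + (t : Fin (k+1))) := by rw [← hji]; ring
        _ = j := by rw [this, add_zero]
    rcases hj with ⟨-, h2⟩ | ⟨-, h2⟩
    · -- prefix case
      by_cases h0 : i.val = 0
      · exact ⟨0, by omega, by simpa using (hji ▸ (by simp [← hji, show i = 0 from Fin.ext h0] : m0 = j))⟩
      by_cases hle : i.val + p ≤ k + 1
      · exfalso
        have := h2 i.val (by rw [hlen]; omega) h0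
        rw [substr_rot s j i.val (by omega), substr_rot s j 0 (by omega)] at this
        simp only [Nat.cast_zero, add_zero, hivl, hji] at this
        exact absurd (hmin j) (not_le.mpr this)
      · refine ⟨k + 1 - i.val, by omega, hwrap _ (by omega)⟩
    · -- suffix case
      by_cases h0 : i.val = k + 1 - p
      · exact ⟨p, by omega, hwrap p (by omega)⟩
      by_cases hle : i.val + p ≤ k + 1
      · exfalso
        have := h2 i.val (by rw [hlen]; omega) h0
        rw [substr_rot s j i.val (by omega), substr_rot s j (k + 1 - p) (by omega)] at this
        rw [hivl, hji] at this
        exact absurd (hmin _) (not_le.mpr this)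
      · refine ⟨k + 1 - i.val, by omega, hwrap _ (by omega)⟩
  calc _ ≤ ((Finset.range (p + 1)).image (fun t : ℕ => m0 + (t : Fin (k + 1)))).card :=
        Finset.card_le_card hsub
    _ ≤ (Finset.range (p + 1)).card := Finset.card_image_le
    _ = p + 1 := Finset.card_range _
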